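/- Let G be a finite simple undirected graph on n vertices with maximum degree Δ ≥ 2, and let k ≥ 1 be an integer. Then the number of vertex sets C ⊆ V with |C| = k such that the induced subgraph G[C] is connected is at most n · (eΔ)^k / ((Δ − 1) · k), where e is Euler's number. -/

import Mathlib

set_option linter.unusedSectionVars false

open Finset

namespace CIS

variable {V : Type*} [Fintype V] [LinearOrder V]
variable (G : SimpleGraph V) [DecidableRel G.Adj]

def nbr (u : V) : List V := (G.neighborFinset u).sort (· ≤ ·)

def kids (C : Finset V) (L : List V) (u : V) : Finset V :=
  (G.neighborFinset u ∩ C) \ L.toFinset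

def step (C : Finset V) (L : List V) (i : ℕ) : List V :=
  match L[i]? with
  | none => L
  | some u => L ++ (kids G C L u).sort (· ≤ ·)

def bfs (C : Finset V) (v : V) : ℕ → List V
  | 0 => [v]
  | m + 1 => step G C (bfs C v m) m

def codeAt (C : Finset V) (v : V) (i : ℕ) : Finset ℕ :=
  match (bfs G C v i)[i]? with
  | none => ∅
  | some u => (kids G C (bfs G C v i) u).image fun x => (nbr G u).idxOf x

def Phi (C : Finset V) (v : V) (k : ℕ) : Finset (ℕ × ℕ) :=
  (Finset.range k).biUnion fun i => (codeAt G C v i).image (Prod.mk i)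

theorem step_of_getElem (C : Finset V) (L : List V) (i : ℕ) (u : V) (h : L[i]? = some u) :
    step G C L i = L ++ (kids G C L u).sort (· ≤ ·) := by
  unfold step; rw [h]

theorem step_of_none (C : Finset V) (L : List V) (i : ℕ) (h : L[i]? = none) :
    step G C L i = L := by
  unfold step; rw [h]

theorem codeAt_of_getElem (C : Finset V) (v : V) (i : ℕ) (u : V)
    (h : (bfs G C v i)[i]? = some u) :
    codeAt G C v i = (kids G C (bfs G C v i) u).image fun x => (nbr G u).idxOf x := by
  unfold codeAt; rw [h]

theorem codeAt_of_none (C : Finset V) (v : V) (i : ℕ) (h : (bfs G C v i)[i]? = none) :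
    codeAt G C v i = ∅ := by
  unfold codeAt; rw [h]

theorem prefix_step (C : Finset V) (L : List V) (i : ℕ) : L <+: step G C L i := by
  unfold step; cases L[i]? with
  | none => exact List.prefix_refl L
  | some u => exact List.prefix_append _ _

theorem bfs_prefix_le (C : Finset V) (v : V) {m m' : ℕ} (h : m ≤ m') :
    bfs G C v m <+: bfs G C v m' := by
  induction m' with
  | zero => simp_all
  | succ n ih =>
    rcases Nat.lt_or_ge m (n+1) with h' | h'
    · exact (ih (Nat.lt_succ_iff.mp h')).trans (prefix_step G C _ n)
    · have : m = n + 1 := le_antisymm h h'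
      subst this; exact List.prefix_refl _

theorem mem_bfs_subset (C : Finset V) (v : V) (hv : v ∈ C) (m : ℕ) :
    ∀ x ∈ bfs G C v m, x ∈ C := by
  induction m with
  | zero => simpa [bfs]
  | succ n ih =>
    intro x hx
    unfold bfs step at hx
    rcases h : (bfs G C v n)[n]? with _ | u <;> rw [h] at hx
    · exact ih x hx
    · rcases List.mem_append.mp hx with h1 | h2
      · exact ih x h1
      · have := (Finset.mem_sort (α := V) (· ≤ ·)).mp h2
        simp only [kids, Finset.mem_sdiff, Finset.mem_inter] at this
        exact this.1.2

theorem bfs_nodup (C : Finset V) (v : V) (m : ℕ) : (bfs G C v m).Nodup := by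
  induction m with
  | zero => simp [bfs]
  | succ n ih =>
    unfold bfs step
    rcases h : (bfs G C v n)[n]? with _ | u
    · exact ih
    · refine List.Nodup.append ih (Finset.sort_nodup _ _) ?_
      intro x hx hx2
      have := (Finset.mem_sort (α := V) (· ≤ ·)).mp hx2
      simp only [kids, Finset.mem_sdiff] at this
      exact this.2 (List.mem_toFinset.mpr hx)

theorem mem_bfs_zero (C : Finset V) (v : V) (m : ℕ) : v ∈ bfs G C v m := by
  have := bfs_prefix_le G C v (Nat.zero_le m)
  exact this.subset (by simp [bfs])

theorem length_bfs_le (C : Finset V) (v : V) (hv : v ∈ C) (m : ℕ) :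
    (bfs G C v m).length ≤ C.card := by
  classical
  have h1 : (bfs G C v m).toFinset.card = (bfs G C v m).length :=
    List.toFinset_card_of_nodup (bfs_nodup G C v m)
  rw [← h1]
  exact Finset.card_le_card (fun x hx => mem_bfs_subset G C v hv m x (List.mem_toFinset.mp hx))

theorem closed_eq (C : Finset V) (hconn : (G.induce (C : Set V)).Connected)
    (S : Finset V) (v : V) (hv : v ∈ S) (hSC : S ⊆ C)
    (hclosed : ∀ x ∈ S, ∀ y ∈ C, G.Adj x y → y ∈ S) : S = C := by
  refine Finset.Subset.antisymm hSC (fun y hy => ?_)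
  have key : ∀ {a b : (C : Set V)} (p : (G.induce (C : Set V)).Walk a b),
      (a : V) ∈ S → (b : V) ∈ S := by
    intro a b p
    induction p with
    | nil => exact id
    | @cons x c _ h _ ih =>
      intro ha
      exact ih (hclosed _ ha _ (Finset.mem_coe.mp c.2) h)
  obtain ⟨p⟩ := hconn ⟨v, Finset.mem_coe.mpr (hSC hv)⟩ ⟨y, Finset.mem_coe.mpr hy⟩
  exact key p hv

theorem length_bfs_ge (C : Finset V) (v : V) (hv : v ∈ C)
    (hconn : (G.induce (C : Set V)).Connected) (m : ℕ) :
    min (m + 1) C.card ≤ (bfs G C v m).length := by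
  induction m using Nat.strong_induction_on with
  | _ m ih =>
    match m with
    | 0 => simpa [bfs] using min_le_left 1 C.card
    | Nat.succ m =>
      have hmono : (bfs G C v m).length ≤ (bfs G C v (m+1)).length :=
        (prefix_step G C _ m).length_le
      rcases Nat.lt_or_ge (bfs G C v m).length C.card with hlt | hge
      swap
      · exact le_trans (min_le_right _ _) (le_trans hge hmono)
      have hIH := ih m (Nat.lt_succ_self m)
      have hlen_m : m + 1 ≤ (bfs G C v m).length := by
        rcases Nat.le_total (m+1) C.card with h | h
        · rwa [min_eq_left h] at hIH
        · rw [min_eq_right h] at hIH; omega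
      rcases Nat.lt_or_ge (m + 1) (bfs G C v (m+1)).length with hbig | hsmall
      · exact le_trans (min_le_left _ _) hbig
      exfalso
      have hlen_eq : (bfs G C v m).length = (bfs G C v (m+1)).length := by omega
      have heq : bfs G C v m = bfs G C v (m+1) :=
        (prefix_step G C _ m).eq_of_length hlen_eq
      have hmlt : m + 1 < C.card := by omega
      have hlenm : (bfs G C v m).length = m + 1 := by omega
      set S := (bfs G C v m).toFinset with hS
      have hcardS : S.card = m + 1 := by
        rw [hS, List.toFinset_card_of_nodup (bfs_nodup G C v m), hlenm]
      have hclosed : ∀ x ∈ S, ∀ y ∈ C, G.Adj x y → y ∈ S := by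
        intro x hx y hy hadj
        obtain ⟨i, hi, hix⟩ := List.mem_iff_getElem.mp (List.mem_toFinset.mp hx)
        have him : i ≤ m := by omega
        have hleni : i + 1 ≤ (bfs G C v i).length := by
          have h2 := ih i (by omega)
          rwa [min_eq_left (by omega)] at h2
        have hgi : (bfs G C v i)[i]? = some x := by
          rw [List.getElem?_eq_getElem hleni]
          exact congrArg some (((bfs_prefix_le G C v him).getElem hleni).symm ▸ hix)
        have hstep : bfs G C v (i+1) = bfs G C v i ++ (kids G C (bfs G C v i) x).sort (· ≤ ·) := by
          rw [show bfs G C v (i+1) = step G C (bfs G C v i) i from rfl,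
            step_of_getElem G C _ i x hgi]
        by_cases hyS : y ∈ (bfs G C v i).toFinset
        · exact List.mem_toFinset.mpr
            ((bfs_prefix_le G C v him).subset (List.mem_toFinset.mp hyS))
        · have hk : y ∈ kids G C (bfs G C v i) x := by
            simp only [kids, Finset.mem_sdiff, Finset.mem_inter,
              SimpleGraph.mem_neighborFinset]
            exact ⟨⟨hadj, hy⟩, hyS⟩
          have hy1 : y ∈ bfs G C v (i+1) := by
            rw [hstep]
            exact List.mem_append.mpr (Or.inr ((Finset.mem_sort _).mpr hk))
          have : y ∈ bfs G C v m := by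
            rw [heq]
            exact (bfs_prefix_le G C v (by omega)).subset hy1
          exact List.mem_toFinset.mpr this
      have hSC : S = C := closed_eq G C hconn S v
        (List.mem_toFinset.mpr (mem_bfs_zero G C v m))
        (fun x hxx => mem_bfs_subset G C v hv m x (List.mem_toFinset.mp hxx)) hclosed
      rw [hSC] at hcardS
      omega

theorem kids_subset_nbr (C : Finset V) (L : List V) (u : V) :
    ∀ x ∈ kids G C L u, x ∈ nbr G u := by
  intro x hx
  rw [nbr, Finset.mem_sort]
  simp only [kids, Finset.mem_sdiff, Finset.mem_inter] at hx
  exact hx.1.1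

theorem getD_indexOf (u x v : V) (hx : x ∈ nbr G u) :
    (nbr G u).getD ((nbr G u).idxOf x) v = x := by
  have h : (nbr G u).idxOf x < (nbr G u).length := List.idxOf_lt_length_iff.mpr hx
  rw [List.getD_eq_getElem _ _ h, List.getElem_idxOf h]

theorem kids_eq_decode (C : Finset V) (L : List V) (u v : V) :
    ((kids G C L u).image fun x => (nbr G u).idxOf x).image
      (fun j => (nbr G u).getD j v) = kids G C L u := by
  rw [Finset.image_image]
  have : ∀ x ∈ kids G C L u,
      ((fun j => (nbr G u).getD j v) ∘ fun x => (nbr G u).idxOf x) x = id x := by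
    intro x hx
    exact getD_indexOf G u x v (kids_subset_nbr G C L u x hx)
  rw [Finset.image_congr this, Finset.image_id]

theorem bfs_eq_of_codes (C₁ C₂ : Finset V) (v : V) (m : ℕ)
    (h : ∀ i < m, codeAt G C₁ v i = codeAt G C₂ v i) :
    bfs G C₁ v m = bfs G C₂ v m := by
  induction m with
  | zero => rfl
  | succ n ih =>
    have hL : bfs G C₁ v n = bfs G C₂ v n := ih (fun i hi => h i (by omega))
    show step G C₁ (bfs G C₁ v n) n = step G C₂ (bfs G C₂ v n) n
    rw [← hL]
    cases hg : (bfs G C₁ v n)[n]? with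
    | none =>
      rw [step_of_none G C₁ _ n hg, step_of_none G C₂ _ n hg]
    | some u =>
      rw [step_of_getElem G C₁ _ n u hg, step_of_getElem G C₂ _ n u hg]
      have hc := h n (Nat.lt_succ_self n)
      rw [codeAt_of_getElem G C₁ v n u hg,
        codeAt_of_getElem G C₂ v n u (by rw [← hL]; exact hg), ← hL] at hc
      have : kids G C₁ (bfs G C₁ v n) u = kids G C₂ (bfs G C₁ v n) u := by
        have h1 := kids_eq_decode G C₁ (bfs G C₁ v n) u v
        have h2 := kids_eq_decode G C₂ (bfs G C₁ v n) u v
        rw [← h1, ← h2, hc]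
      rw [this]

theorem length_bfs_eq_sum (C : Finset V) (v : V) (m : ℕ) :
    (bfs G C v m).length = 1 + ∑ i ∈ Finset.range m, (codeAt G C v i).card := by
  induction m with
  | zero => simp [bfs]
  | succ n ih =>
    rw [Finset.sum_range_succ, ← Nat.add_assoc, ← ih]
    show (step G C (bfs G C v n) n).length = _
    cases hg : (bfs G C v n)[n]? with
    | none =>
      rw [step_of_none G C _ n hg, codeAt_of_none G C v n hg]
      simp
    | some u =>
      rw [step_of_getElem G C _ n u hg, codeAt_of_getElem G C v n u hg]
      rw [List.length_append, Finset.length_sort]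
      congr 1
      rw [Finset.card_image_of_injOn]
      intro x hx y hy hxy
      exact List.idxOf_inj (kids_subset_nbr G C _ u x hx)
        |>.mp hxy

theorem codeAt_lt (C : Finset V) (v : V) (i j : ℕ) (hj : j ∈ codeAt G C v i) :
    j < G.maxDegree := by
  unfold codeAt at hj
  cases hg : (bfs G C v i)[i]? with
  | none => rw [hg] at hj; simp at hj
  | some u =>
    rw [hg] at hj
    obtain ⟨x, hx, rfl⟩ := Finset.mem_image.mp hj
    have h1 : (nbr G u).idxOf x < (nbr G u).length :=
      List.idxOf_lt_length_iff.mpr (kids_subset_nbr G C _ u x hx)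
    have h2 : (nbr G u).length = G.degree u := by
      rw [nbr, Finset.length_sort]; rfl
    calc (nbr G u).idxOf x < (nbr G u).length := h1
      _ = G.degree u := h2
      _ ≤ G.maxDegree := G.degree_le_maxDegree u

theorem length_bfs_card (C : Finset V) (v : V) (hv : v ∈ C)
    (hconn : (G.induce (C : Set V)).Connected) :
    (bfs G C v C.card).length = C.card := by
  refine le_antisymm (length_bfs_le G C v hv _) ?_
  have := length_bfs_ge G C v hv hconn C.card
  omega

theorem bfs_toFinset (C : Finset V) (v : V) (hv : v ∈ C)
    (hconn : (G.induce (C : Set V)).Connected) :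
    (bfs G C v C.card).toFinset = C := by
  refine Finset.eq_of_subset_of_card_le
    (fun x hx => mem_bfs_subset G C v hv _ x (List.mem_toFinset.mp hx)) (le_of_eq ?_)
  rw [List.toFinset_card_of_nodup (bfs_nodup G C v _), length_bfs_card G C v hv hconn]

theorem mem_Phi (C : Finset V) (v : V) (k : ℕ) (p : ℕ × ℕ) :
    p ∈ Phi G C v k ↔ p.1 < k ∧ p.2 ∈ codeAt G C v p.1 := by
  cases p with
  | mk i j =>
    simp only [Phi, Finset.mem_biUnion, Finset.mem_range, Finset.mem_image, Prod.mk.injEq]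
    constructor
    · rintro ⟨i', hi', j', hj', rfl, rfl⟩
      exact ⟨hi', hj'⟩
    · rintro ⟨hi, hj⟩
      exact ⟨i, hi, j, hj, rfl, rfl⟩

theorem Phi_card (C : Finset V) (v : V) (k : ℕ) (hk : 1 ≤ k) (hcard : C.card = k)
    (hv : v ∈ C) (hconn : (G.induce (C : Set V)).Connected) :
    (Phi G C v k).card = k - 1 := by
  rw [Phi, Finset.card_biUnion]
  · have h1 : ∀ i ∈ Finset.range k, ((codeAt G C v i).image (Prod.mk i)).card
        = (codeAt G C v i).card := by
      intro i _
      exact Finset.card_image_of_injective _ (fun a b hab => (Prod.mk.injEq _ _ _ _).mp hab |>.2)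
    rw [Finset.sum_congr rfl h1]
    have h2 := length_bfs_eq_sum G C v k
    rw [← hcard] at h2 ⊢
    rw [length_bfs_card G C v hv hconn] at h2
    omega
  · intro i _ j _ hij
    simp only [Finset.disjoint_left]
    rintro p hp hp2
    obtain ⟨_, _, rfl⟩ := Finset.mem_image.mp hp
    obtain ⟨_, _, h⟩ := Finset.mem_image.mp hp2
    exact hij ((Prod.mk.injEq _ _ _ _).mp h.symm).1

theorem Phi_subset (C : Finset V) (v : V) (k : ℕ) :
    Phi G C v k ⊆ Finset.range k ×ˢ Finset.range G.maxDegree := by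
  intro p hp
  rw [mem_Phi] at hp
  rw [Finset.mem_product, Finset.mem_range, Finset.mem_range]
  exact ⟨hp.1, codeAt_lt G C v p.1 p.2 hp.2⟩

/-- per-vertex counting bound -/
theorem key (k : ℕ) (hk : 1 ≤ k) (v : V) (𝒜 : Finset (Finset V))
    (h𝒜 : ∀ C ∈ 𝒜, C.card = k ∧ v ∈ C ∧ (G.induce (C : Set V)).Connected) :
    𝒜.card ≤ (k * G.maxDegree).choose (k - 1) := by
  classical
  have hinj : ∀ C₁ ∈ 𝒜, ∀ C₂ ∈ 𝒜, Phi G C₁ v k = Phi G C₂ v k → C₁ = C₂ := by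
    intro C₁ h₁ C₂ h₂ hPhi
    obtain ⟨hc₁, hv₁, hconn₁⟩ := h𝒜 C₁ h₁
    obtain ⟨hc₂, hv₂, hconn₂⟩ := h𝒜 C₂ h₂
    have hcodes : ∀ i < k, codeAt G C₁ v i = codeAt G C₂ v i := by
      intro i hi
      ext j
      have e1 := mem_Phi G C₁ v k (i, j)
      have e2 := mem_Phi G C₂ v k (i, j)
      rw [hPhi] at e1
      constructor
      · intro hj; exact (e2.mp (e1.mpr ⟨hi, hj⟩)).2
      · intro hj; exact (e1.mp (e2.mpr ⟨hi, hj⟩)).2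
    have hbfs := bfs_eq_of_codes G C₁ C₂ v k hcodes
    have f1 := bfs_toFinset G C₁ v hv₁ hconn₁
    have f2 := bfs_toFinset G C₂ v hv₂ hconn₂
    rw [← f1, ← f2, hc₁, hc₂, hbfs]
  have hmap : ∀ C ∈ 𝒜, Phi G C v k ∈
      (Finset.range k ×ˢ Finset.range G.maxDegree).powersetCard (k - 1) := by
    intro C hC
    obtain ⟨hc, hv', hconn⟩ := h𝒜 C hC
    rw [Finset.mem_powersetCard]
    exact ⟨Phi_subset G C v k, Phi_card G C v k hk hc hv' hconn⟩
  calc 𝒜.card ≤ ((Finset.range k ×ˢ Finset.range G.maxDegree).powersetCard (k - 1)).card :=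
        Finset.card_le_card_of_injOn _ hmap hinj
    _ = (k * G.maxDegree).choose (k - 1) := by
        rw [Finset.card_powersetCard, Finset.card_product, Finset.card_range, Finset.card_range]


theorem choose_bound (k Δ : ℕ) (hk : 1 ≤ k) (hΔ : 2 ≤ Δ) :
    ((k * Δ).choose (k - 1) : ℝ) ≤ Real.exp 1 ^ k * (Δ : ℝ) ^ (k - 1) := by
  have he1 : (1 : ℝ) ≤ Real.exp 1 := by
    have := Real.add_one_le_exp 1; linarith
  rcases Nat.eq_or_lt_of_le hk with h1 | h2
  · rw [← h1]
    simpa using he1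
  · set r := k - 1 with hr
    have hk' : k = r + 1 := by omega
    have hr1 : 1 ≤ r := by omega
    have hrR : (0 : ℝ) < r := by exact_mod_cast Nat.lt_of_lt_of_le Nat.zero_lt_one hr1
    have hfac : (0 : ℝ) < (Nat.factorial r : ℝ) := by exact_mod_cast Nat.factorial_pos r
    have hΔR : (0 : ℝ) < (Δ : ℝ) := by exact_mod_cast Nat.lt_of_lt_of_le Nat.zero_lt_two hΔ
    have h1 : ((k * Δ).choose r : ℝ) ≤ ((k : ℝ) * Δ) ^ r / (Nat.factorial r : ℝ) := by
      have := Nat.choose_le_pow_div (α := ℝ) r (k * Δ)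
      push_cast at this
      exact this
    have h2 : (r : ℝ) ^ r / (Nat.factorial r : ℝ) ≤ Real.exp 1 ^ r := by
      have := Real.pow_div_factorial_le_exp (x := (r : ℝ)) (by positivity) r
      rwa [show Real.exp (r : ℝ) = Real.exp 1 ^ r by
        rw [← Real.exp_nat_mul]; norm_num] at this
    have h3 : ((k : ℝ) / r) ^ r ≤ Real.exp 1 := by
      have e1 : (k : ℝ) / r = 1 + 1 / r := by
        rw [hk']; push_cast; field_simp
      have e2 : (1 : ℝ) + 1 / r ≤ Real.exp (1 / r) := by
        have := Real.add_one_le_exp (1 / (r : ℝ)); linarith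
      calc ((k : ℝ) / r) ^ r = (1 + 1 / (r : ℝ)) ^ r := by rw [e1]
        _ ≤ Real.exp (1 / r) ^ r := by
            apply pow_le_pow_left₀ (by positivity) e2
        _ = Real.exp ((r : ℕ) * (1 / (r : ℝ))) := by rw [Real.exp_nat_mul]
        _ = Real.exp 1 := by
            congr 1
            field_simp
    calc ((k * Δ).choose r : ℝ) ≤ ((k : ℝ) * Δ) ^ r / (Nat.factorial r : ℝ) := h1
      _ = ((k : ℝ) / r) ^ r * ((r : ℝ) ^ r / (Nat.factorial r : ℝ)) * (Δ : ℝ) ^ r := by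
          rw [div_pow, mul_pow]
          field_simp
      _ ≤ Real.exp 1 * Real.exp 1 ^ r * (Δ : ℝ) ^ r := by
          have hA : (0:ℝ) ≤ ((k : ℝ) / r) ^ r := by positivity
          have hB : (0:ℝ) ≤ (r : ℝ) ^ r / (Nat.factorial r : ℝ) := by positivity
          gcongr
      _ = Real.exp 1 ^ k * (Δ : ℝ) ^ r := by
          rw [hk', pow_succ]; ring

theorem main {V : Type*} [Fintype V] [LinearOrder V] (G : SimpleGraph V) [DecidableRel G.Adj]
    (k : ℕ) (hk : 1 ≤ k) (hΔ : 2 ≤ G.maxDegree) :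
    (Set.ncard {C : Finset V | C.card = k ∧ (G.induce (C : Set V)).Connected} : ℝ) ≤
      (Fintype.card V : ℝ) * (Real.exp 1 * (G.maxDegree : ℝ)) ^ k /
        (((G.maxDegree : ℝ) - 1) * (k : ℝ)) := by
  classical
  set Δ := G.maxDegree with hΔdef
  set 𝒜 : Finset (Finset V) := Finset.univ.filter
    (fun C => C.card = k ∧ (G.induce (C : Set V)).Connected) with h𝒜
  have hset : {C : Finset V | C.card = k ∧ (G.induce (C : Set V)).Connected} = ↑𝒜 := by
    ext C; simp [h𝒜]
  rw [hset, Set.ncard_coe_finset]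
  -- double counting
  have hdc : 𝒜.card * k ≤ Fintype.card V * ((k * Δ).choose (k - 1)) := by
    have e1 : 𝒜.card * k = ∑ C ∈ 𝒜, C.card := by
      rw [Finset.sum_congr rfl (fun C hC => ((Finset.mem_filter.mp hC).2.1 : C.card = k)),
        Finset.sum_const, smul_eq_mul, mul_comm]
    have e2 : ∑ C ∈ 𝒜, C.card = ∑ v : V, (𝒜.filter (fun C => v ∈ C)).card := by
      have : ∀ C ∈ 𝒜, C.card = ∑ v : V, if v ∈ C then 1 else 0 := by
        intro C _
        rw [Finset.sum_ite_mem, Finset.univ_inter, Finset.sum_const, smul_eq_mul, mul_one]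
      rw [Finset.sum_congr rfl this, Finset.sum_comm]
      exact Finset.sum_congr rfl (fun v _ => (Finset.card_filter _ _).symm)
    have e3 : ∀ v : V, (𝒜.filter (fun C => v ∈ C)).card ≤ (k * Δ).choose (k - 1) := by
      intro v
      apply key G k hk v
      intro C hC
      simp only [h𝒜, Finset.mem_filter, Finset.mem_univ, true_and] at hC
      exact ⟨hC.1.1, hC.2, hC.1.2⟩
    calc 𝒜.card * k = ∑ v : V, (𝒜.filter (fun C => v ∈ C)).card := by rw [e1, e2]
      _ ≤ ∑ _v : V, (k * Δ).choose (k - 1) := Finset.sum_le_sum (fun v _ => e3 v)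
      _ = Fintype.card V * ((k * Δ).choose (k - 1)) := by
          rw [Finset.sum_const, smul_eq_mul, Finset.card_univ]
  -- real analysis
  have hkR : (0 : ℝ) < k := by exact_mod_cast hk
  have hΔR : (2 : ℝ) ≤ (Δ : ℝ) := by exact_mod_cast hΔ
  have hch := choose_bound k Δ hk hΔ
  have hcast : (𝒜.card : ℝ) * k ≤ (Fintype.card V : ℝ) * ((k * Δ).choose (k - 1) : ℝ) := by
    exact_mod_cast hdc
  rw [le_div_iff₀ (by nlinarith : (0 : ℝ) < ((Δ : ℝ) - 1) * k)]
  have hΔpow : (Δ : ℝ) ^ (k - 1) * ((Δ : ℝ) - 1) ≤ (Δ : ℝ) ^ k := by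
    have hpe : (Δ : ℝ) ^ (k - 1) * (Δ : ℝ) = (Δ : ℝ) ^ k := by
      rw [← pow_succ]; congr 1; omega
    nlinarith [pow_pos (show (0 : ℝ) < (Δ : ℝ) by linarith) (k - 1)]
  have hn0 : (0 : ℝ) ≤ (Fintype.card V : ℝ) := by positivity
  calc (𝒜.card : ℝ) * (((Δ : ℝ) - 1) * k)
      = ((𝒜.card : ℝ) * k) * ((Δ : ℝ) - 1) := by ring
    _ ≤ ((Fintype.card V : ℝ) * ((k * Δ).choose (k - 1) : ℝ)) * ((Δ : ℝ) - 1) := by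
        apply mul_le_mul_of_nonneg_right hcast (by linarith)
    _ ≤ ((Fintype.card V : ℝ) * (Real.exp 1 ^ k * (Δ : ℝ) ^ (k - 1))) * ((Δ : ℝ) - 1) := by
        apply mul_le_mul_of_nonneg_right _ (by linarith)
        exact mul_le_mul_of_nonneg_left hch hn0
    _ = (Fintype.card V : ℝ) * Real.exp 1 ^ k * ((Δ : ℝ) ^ (k - 1) * ((Δ : ℝ) - 1)) := by ring
    _ ≤ (Fintype.card V : ℝ) * Real.exp 1 ^ k * (Δ : ℝ) ^ k := by
        apply mul_le_mul_of_nonneg_left hΔpow (by positivity)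
    _ = (Fintype.card V : ℝ) * (Real.exp 1 * (Δ : ℝ)) ^ k := by
        rw [mul_pow]; ring

end CIS

/-- The number of connected induced subgraphs of size `k` in a graph on `n` vertices with
maximum degree `Δ ≥ 2` is at most `n · (eΔ)^k / ((Δ − 1) · k)` for `k ≥ 1`. -/
theorem card_connected_induced_subgraphs_le {V : Type*} [Fintype V] [DecidableEq V]
    (G : SimpleGraph V) [DecidableRel G.Adj] (k : ℕ) (hk : 1 ≤ k)
    (hΔ : 2 ≤ G.maxDegree) :
    (Set.ncard {C : Finset V | C.card = k ∧ (G.induce (C : Set V)).Connected} : ℝ) ≤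
      (Fintype.card V : ℝ) * (Real.exp 1 * (G.maxDegree : ℝ)) ^ k /
        (((G.maxDegree : ℝ) - 1) * (k : ℝ)) := by
  letI : LinearOrder V := LinearOrder.lift' (Fintype.equivFin V) (Fintype.equivFin V).injective
  exact CIS.main G k hk hΔ
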